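/- For a partition π and positive integer n, one has |π| ≥ n if and only if every partition σ satisfying the following condition has at least n parts: for all r and m, if m[r] ≤ π and (m+1)[r] ≰ π and [r] ≤ π, then σ has at least m parts of size exactly r. -/

import Mathlib

/-- A partition: a weakly decreasing sequence of naturals with finite support. -/
structure YPart where
  f : ℕ → ℕ
  mono : ∀ i j : ℕ, i ≤ j → f j ≤ f i
  fin : ∃ N : ℕ, ∀ i : ℕ, N ≤ i → f i = 0

namespace YPart

theorem ext' {σ π : YPart} (h : σ.f = π.f) : σ = π := by
  cases σ; cases π; cases h; rfl

/-- The Young order: containment of diagrams, i.e. pointwise comparison. -/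
instance : PartialOrder YPart where
  le σ π := ∀ i, σ.f i ≤ π.f i
  le_refl σ i := le_refl _
  le_trans a b c hab hbc i := (hab i).trans (hbc i)
  le_antisymm a b hab hba := ext' (funext fun i => le_antisymm (hab i) (hba i))

noncomputable def card (π : YPart) : ℕ := ∑' i, π.f i

noncomputable def length (π : YPart) : ℕ := Nat.card {i : ℕ | 0 < π.f i}

noncomputable def mult (π : YPart) (r : ℕ) : ℕ := Nat.card {i : ℕ | π.f i = r}

/-- The rectangular partition `m[n]`: `m` parts of size `n`. -/
def rect (m n : ℕ) : YPart where
  f i := if i < m then n else 0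
  mono := by intro i j hij; (try dsimp only); split_ifs <;> omega
  fin := ⟨m, fun i hi => by (try dsimp only); split_ifs <;> omega⟩

/-- The staircase (factorial) partition `[n]! = (n, n-1, …, 1)`. -/
def stair (n : ℕ) : YPart where
  f i := n - i
  mono := by intro i j hij; (try dsimp only); omega
  fin := ⟨n, fun i hi => by (try dsimp only); omega⟩

def yempty : YPart := rect 0 0

def Rectangular (π : YPart) : Prop := ∃ m n : ℕ, π = rect m n

end YPart

namespace YPart

lemma le_iff' {σ π : YPart} : σ ≤ π ↔ ∀ i, σ.f i ≤ π.f i := Iff.rfl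

lemma exists_lt_aux (π : YPart) {r : ℕ} (hr : 0 < r) : ∃ i, π.f i < r := by
  obtain ⟨N, hN⟩ := π.fin
  exact ⟨N, by rw [hN N le_rfl]; exact hr⟩

open Classical in
/-- number of parts of `π` of size at least `r` (for `r ≥ 1`). -/
noncomputable def cnt (π : YPart) (r : ℕ) : ℕ :=
  if h : ∃ i, π.f i < r then Nat.find h else 0

lemma cnt_spec (π : YPart) {r : ℕ} (hr : 0 < r) : π.f (cnt π r) < r := by
  have h := exists_lt_aux π hr
  simp only [cnt, dif_pos h]
  exact Nat.find_spec h

lemma lt_cnt_iff (π : YPart) {r : ℕ} (hr : 0 < r) (i : ℕ) :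
    i < cnt π r ↔ r ≤ π.f i := by
  have h := exists_lt_aux π hr
  simp only [cnt, dif_pos h]
  constructor
  · intro hi
    exact le_of_not_gt (Nat.find_min h hi)
  · intro hi
    by_contra hc
    have := π.mono _ i (le_of_not_gt hc)
    have := Nat.find_spec h
    omega

lemma rect_le_iff {π : YPart} {s r : ℕ} :
    rect s r ≤ π ↔ ∀ i, i < s → r ≤ π.f i := by
  constructor
  · intro h i hi
    have := h i
    simpa [rect, hi] using this
  · intro h i
    by_cases hi : i < s
    · simpa [rect, hi] using h i hi
    · simp [rect, hi]

lemma rect_le_iff_cnt {π : YPart} {s r : ℕ} (hr : 0 < r) :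
    rect s r ≤ π ↔ s ≤ cnt π r := by
  rw [rect_le_iff]
  constructor
  · intro h
    by_contra hc
    have h1 := h (cnt π r) (by omega)
    have h2 := cnt_spec π hr
    omega
  · intro h i hi
    exact (lt_cnt_iff π hr i).mp (by omega)

lemma cnt_zero_of_gt {π : YPart} {r : ℕ} (hr : π.f 0 < r) : cnt π r = 0 := by
  by_contra hc
  have h0 : 0 < r := by omega
  have := (lt_cnt_iff π h0 0).mp (by omega)
  omega

lemma card_eq_sum_range (π : YPart) {N : ℕ} (hN : ∀ i, N ≤ i → π.f i = 0) :
    card π = ∑ i ∈ Finset.range N, π.f i := by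
  apply tsum_eq_sum
  intro i hi
  exact hN i (by simpa using hi)

lemma card_eq_sum_cnt (π : YPart) :
    card π = ∑ r ∈ Finset.Icc 1 (π.f 0), cnt π r := by
  obtain ⟨N, hN⟩ := π.fin
  rw [card_eq_sum_range π hN]
  have hcntle : ∀ r, 0 < r → cnt π r ≤ N := by
    intro r hr
    by_contra hc
    have := (lt_cnt_iff π hr N).mp (by omega)
    rw [hN N le_rfl] at this; omega
  have h1 : ∀ i ∈ Finset.range N, π.f i =
      ∑ r ∈ Finset.Icc 1 (π.f 0), (if r ≤ π.f i then 1 else 0) := by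
    intro i _
    rw [← Finset.card_filter]
    have : (Finset.Icc 1 (π.f 0)).filter (fun r => r ≤ π.f i) = Finset.Icc 1 (π.f i) := by
      ext x
      have := π.mono 0 i (Nat.zero_le i)
      simp only [Finset.mem_filter, Finset.mem_Icc]
      omega
    rw [this, Nat.card_Icc]
    omega
  rw [Finset.sum_congr rfl h1, Finset.sum_comm]
  apply Finset.sum_congr rfl
  intro r hr
  rw [Finset.mem_Icc] at hr
  rw [← Finset.card_filter]
  have : (Finset.range N).filter (fun i => r ≤ π.f i) = Finset.range (cnt π r) := by
    ext i
    simp only [Finset.mem_filter, Finset.mem_range]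
    rw [← lt_cnt_iff π (by omega : 0 < r) i]
    have := hcntle r (by omega)
    omega
  rw [this, Finset.card_range]

lemma length_eq (σ : YPart) {M : ℕ} (hM : ∀ i, M ≤ i → σ.f i = 0) :
    length σ = ((Finset.range M).filter (fun i => 0 < σ.f i)).card := by
  rw [length]
  have h : {i : ℕ | 0 < σ.f i} = ↑((Finset.range M).filter (fun i => 0 < σ.f i)) := by
    ext i
    simp only [Set.mem_setOf_eq, Finset.coe_filter, Finset.mem_range, Set.mem_setOf_eq]
    constructor
    · intro hi
      refine ⟨?_, hi⟩
      by_contra hc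
      have := hM i (by omega)
      omega
    · exact fun h => h.2
  rw [h, Nat.card_coe_set_eq, Set.ncard_coe_finset]

lemma mult_eq (σ : YPart) {M : ℕ} (hM : ∀ i, M ≤ i → σ.f i = 0) {r : ℕ} (hr : 0 < r) :
    mult σ r = ((Finset.range M).filter (fun i => σ.f i = r)).card := by
  rw [mult]
  have h : {i : ℕ | σ.f i = r} = ↑((Finset.range M).filter (fun i => σ.f i = r)) := by
    ext i
    simp only [Set.mem_setOf_eq, Finset.coe_filter, Finset.mem_range, Set.mem_setOf_eq]
    constructor
    · intro hi
      refine ⟨?_, hi⟩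
      by_contra hc
      have := hM i (by omega)
      omega
    · exact fun h => h.2
  rw [h, Nat.card_coe_set_eq, Set.ncard_coe_finset]

end YPart


open YPart in
/-- `|π| ≥ n` iff every partition σ satisfying the condition (**) has at least
`n` parts, where (**): for all `r, m`, if `m[r] ≤ π`, `(m+1)[r] ≰ π` and
`[r] ≤ π`, then σ has at least `m` parts of size exactly `r`. -/
theorem card_ge_iff (π : YPart) (n : ℕ) (hn : 0 < n) :
    n ≤ card π ↔
      ∀ σ : YPart,
        (∀ r s : ℕ, rect s r ≤ π → ¬ rect (s + 1) r ≤ π → rect 1 r ≤ π →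
          s ≤ mult σ r) →
        n ≤ length σ := by
  set R := π.f 0 with hR
  constructor
  · -- forward
    intro h σ hσ
    obtain ⟨M, hM⟩ := σ.fin
    -- cnt π r ≤ mult σ r for r in [1, R]
    have hcm : ∀ r ∈ Finset.Icc 1 R, cnt π r ≤ mult σ r := by
      intro r hrm
      rw [Finset.mem_Icc] at hrm
      have hr : 0 < r := hrm.1
      apply hσ r (cnt π r)
      · exact (rect_le_iff_cnt hr).mpr le_rfl
      · intro hc
        have := (rect_le_iff_cnt hr).mp hc
        omega
      · refine (rect_le_iff_cnt hr).mpr ?_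
        have := (lt_cnt_iff π hr 0).mpr hrm.2
        omega
    -- sum of multiplicities bounded by length
    have hsum : ∑ r ∈ Finset.Icc 1 R, mult σ r ≤ length σ := by
      rw [length_eq σ hM]
      have hme : ∀ r ∈ Finset.Icc 1 R,
          mult σ r = ((Finset.range M).filter (fun i => σ.f i = r)).card := by
        intro r hrm
        rw [Finset.mem_Icc] at hrm
        exact mult_eq σ hM hrm.1
      rw [Finset.sum_congr rfl hme]
      set s := (Finset.range M).filter (fun i => σ.f i ∈ Finset.Icc 1 R) with hs
      have hfib : s.card = ∑ r ∈ Finset.Icc 1 R, (s.filter (fun i => σ.f i = r)).card :=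
        Finset.card_eq_sum_card_fiberwise (fun x hx => (Finset.mem_filter.mp hx).2)
      have heq : ∀ r ∈ Finset.Icc 1 R,
          (Finset.range M).filter (fun i => σ.f i = r) = s.filter (fun i => σ.f i = r) := by
        intro r hrm
        rw [Finset.mem_Icc] at hrm
        ext i
        simp only [hs, Finset.mem_filter, Finset.mem_range, Finset.mem_Icc]
        constructor
        · rintro ⟨h1, h2⟩
          exact ⟨⟨h1, by omega⟩, h2⟩
        · rintro ⟨⟨h1, _⟩, h2⟩
          exact ⟨h1, h2⟩
      have hstep : ∑ r ∈ Finset.Icc 1 R, ((Finset.range M).filter (fun i => σ.f i = r)).card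
          = s.card := by
        rw [hfib]
        exact Finset.sum_congr rfl (fun r hr => by rw [heq r hr])
      rw [hstep]
      apply Finset.card_le_card
      intro i hi
      simp only [hs, Finset.mem_filter, Finset.mem_range, Finset.mem_Icc] at hi ⊢
      exact ⟨hi.1, by omega⟩
    calc n ≤ card π := h
      _ = ∑ r ∈ Finset.Icc 1 R, cnt π r := card_eq_sum_cnt π
      _ ≤ ∑ r ∈ Finset.Icc 1 R, mult σ r := Finset.sum_le_sum hcm
      _ ≤ length σ := hsum
  · -- backward
    intro h
    by_contra hc
    push_neg at hc
    -- construct σ with exactly cnt π r parts of size r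
    set D : ℕ → ℕ := fun r => ∑ t ∈ Finset.Icc r R, cnt π t with hDdef
    have hD : ∀ a b : ℕ, a ≤ b → D b ≤ D a := by
      intro a b hab
      apply Finset.sum_le_sum_of_subset
      exact Finset.Icc_subset_Icc_left hab
    set g : ℕ → ℕ := fun j => ((Finset.Icc 1 R).filter (fun r => j < D r)).card with hgdef
    have hgmono : ∀ i j : ℕ, i ≤ j → g j ≤ g i := by
      intro i j hij
      apply Finset.card_le_card
      intro r hr
      simp only [Finset.mem_filter] at hr ⊢
      exact ⟨hr.1, by omega⟩
    have hgfin : ∀ j, D 1 ≤ j → g j = 0 := by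
      intro j hj
      apply Finset.card_eq_zero.mpr
      apply Finset.filter_eq_empty_iff.mpr
      intro r hr
      rw [Finset.mem_Icc] at hr
      have := hD 1 r hr.1
      omega
    set σ : YPart := ⟨g, hgmono, ⟨D 1, hgfin⟩⟩ with hσdef
    -- key characterization
    have hkey : ∀ r, 1 ≤ r → r ≤ R → ∀ j, (r ≤ g j ↔ j < D r) := by
      intro r hr1 hrR j
      constructor
      · intro hrg
        have hex : ∃ t ∈ (Finset.Icc 1 R).filter (fun t => j < D t), r ≤ t := by
          by_contra hcc
          push_neg at hcc
          have hsub : (Finset.Icc 1 R).filter (fun t => j < D t) ⊆ Finset.Icc 1 (r - 1) := by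
            intro t ht
            have h1 := hcc t ht
            have h2 := (Finset.mem_filter.mp ht).1
            rw [Finset.mem_Icc] at h2 ⊢
            omega
          have := Finset.card_le_card hsub
          rw [Nat.card_Icc] at this
          simp only [hgdef] at hrg
          omega
        obtain ⟨t, ht, hrt⟩ := hex
        have := (Finset.mem_filter.mp ht).2
        have := hD r t hrt
        omega
      · intro hj
        have hsub : Finset.Icc 1 r ⊆ (Finset.Icc 1 R).filter (fun t => j < D t) := by
          intro t ht
          rw [Finset.mem_Icc] at ht
          rw [Finset.mem_filter, Finset.mem_Icc]
          have := hD t r ht.2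
          exact ⟨⟨ht.1, by omega⟩, by omega⟩
        have := Finset.card_le_card hsub
        rw [Nat.card_Icc] at this
        simp only [hgdef]
        omega
    -- D r = cnt π r + D (r+1)
    have hDsucc : ∀ r, 1 ≤ r → r ≤ R → D r = cnt π r + D (r + 1) := by
      intro r hr1 hrR
      have : Finset.Icc r R = insert r (Finset.Icc (r + 1) R) := by
        ext x
        simp only [Finset.mem_Icc, Finset.mem_insert]
        omega
      simp only [hDdef]
      rw [this, Finset.sum_insert (by rw [Finset.mem_Icc]; omega)]
    -- σ satisfies the hypothesis
    have hσprop : ∀ r s : ℕ, rect s r ≤ π → ¬ rect (s + 1) r ≤ π → rect 1 r ≤ π →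
        s ≤ mult σ r := by
      intro r s h1 h2 h3
      have hr : 0 < r := by
        by_contra hr0
        apply h2
        intro i
        have : r = 0 := by omega
        simp [rect, this]
      have hrR : r ≤ R := by
        have := h3 0
        simpa [rect] using this
      have hscnt : s ≤ cnt π r := (rect_le_iff_cnt hr).mp h1
      -- show cnt π r ≤ mult σ r
      have hmultge : cnt π r ≤ mult σ r := by
        have hsub : Set.Ico (D (r + 1)) (D r) ⊆ {i : ℕ | σ.f i = r} := by
          intro j hj
          rw [Set.mem_Ico] at hj
          have hge : r ≤ g j := (hkey r hr hrR j).mpr hj.2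
          have hle : g j ≤ r := by
            by_contra hcc
            push_neg at hcc
            by_cases hr1R : r + 1 ≤ R
            · have := (hkey (r + 1) (by omega) hr1R j).mp (by omega)
              omega
            · have : g j ≤ R := by
                simp only [hgdef]
                calc ((Finset.Icc 1 R).filter (fun t => j < D t)).card
                    ≤ (Finset.Icc 1 R).card := Finset.card_filter_le _ _
                  _ = R := by rw [Nat.card_Icc]; omega
              omega
          show σ.f j = r
          simp only [hσdef]
          omega
        have hfin : ({i : ℕ | σ.f i = r}).Finite := by
          apply Set.Finite.subset (Set.finite_Iio (D 1))
          intro j hj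
          simp only [Set.mem_setOf_eq, hσdef] at hj
          have : 1 ≤ g j := by omega
          have := (hkey 1 le_rfl (by omega) j).mp this
          simp only [Set.mem_Iio]
          have := hD 1 1 le_rfl
          omega
        have h5 : (Set.Ico (D (r + 1)) (D r)).ncard ≤ ({i : ℕ | σ.f i = r}).ncard :=
          Set.ncard_le_ncard hsub hfin
        have h6 : (Set.Ico (D (r + 1)) (D r)).ncard = D r - D (r + 1) := by
          rw [← Finset.coe_Ico, Set.ncard_coe_finset, Nat.card_Ico]
        have h7 : D r - D (r + 1) = cnt π r := by
          have := hDsucc r hr hrR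
          omega
        rw [mult, Nat.card_coe_set_eq]
        omega
      omega
    -- length σ = card π
    have hlen : length σ = card π := by
      have hset : {i : ℕ | 0 < σ.f i} = Set.Iio (D 1) := by
        ext j
        simp only [Set.mem_setOf_eq, Set.mem_Iio, hσdef]
        constructor
        · intro hj
          have hne : ((Finset.Icc 1 R).filter (fun r => j < D r)).Nonempty := by
            rw [← Finset.card_pos]; exact hj
          obtain ⟨t, ht⟩ := hne
          rw [Finset.mem_filter, Finset.mem_Icc] at ht
          have := hD 1 t ht.1.1
          omega
        · intro hj
          by_cases hR1 : 1 ≤ R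
          · have := (hkey 1 le_rfl hR1 j).mpr hj
            omega
          · exfalso
            have : Finset.Icc 1 R = ∅ := by
              apply Finset.Icc_eq_empty
              omega
            simp only [hDdef, this, Finset.sum_empty] at hj
            omega
      rw [length, hset, ← Finset.coe_Iio, Nat.card_coe_set_eq,
        Set.ncard_coe_finset, Nat.card_Iio]
      rw [card_eq_sum_cnt π]
    have := h σ hσprop
    rw [hlen] at this
    omega
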